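/- There exist a finite simple graph G on n vertices with no isolated vertices and a real λ > 0 such that E_G(λ) > (1/n)·Σ_{uv∈E(G)} ((d_u+d_v)/(d_u·d_v))·E_{K_{d_u,d_v}}(λ). That is, the edge-based degree-sequence upper bound on the free energy density of Sah–Sawhney–Stoner–Zhao does not extend to an upper bound on the occupancy fraction. -/

import Mathlib

open scoped Classical

/-- The finset of independent sets of a finite simple graph (the empty set counts). -/
noncomputable def indepSets {V : Type*} [Fintype V] (G : SimpleGraph V) : Finset (Finset V) :=
  Finset.univ.filter fun I => ∀ u ∈ I, ∀ v ∈ I, ¬ G.Adj u v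

/-- The hard-core partition function `Z_G(λ) = Σ_{I independent} λ^|I|`. -/
noncomputable def hcZ {V : Type*} [Fintype V] (G : SimpleGraph V) (l : ℝ) : ℝ :=
  ∑ I ∈ indepSets G, l ^ I.card

/-- The occupancy fraction `E_G(λ) = λ Z_G'(λ)/(n Z_G(λ))`, i.e. `(1/n)` times the
expected size of an independent set from the hard-core model; note
`λ Z_G'(λ) = Σ_I |I| λ^|I|`. -/
noncomputable def hcE {V : Type*} [Fintype V] (G : SimpleGraph V) (l : ℝ) : ℝ :=
  (∑ I ∈ indepSets G, (I.card : ℝ) * l ^ I.card) / ((Fintype.card V : ℝ) * hcZ G l)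

def adj6 : Fin 6 → Fin 6 → Bool := fun a b =>
  decide ((a.val, b.val) ∈ [(0,1),(0,2),(0,3),(1,4),(2,4),(4,5)] ∨
          (b.val, a.val) ∈ [(0,1),(0,2),(0,3),(1,4),(2,4),(4,5)])

def G6 : SimpleGraph (Fin 6) where
  Adj a b := adj6 a b = true
  symm := ⟨fun a b h => (by decide : ∀ a b : Fin 6, adj6 a b = true → adj6 b a = true) a b h⟩
  loopless := ⟨fun a h => (by decide : ∀ a : Fin 6, ¬ adj6 a a = true) a h⟩

instance instDecG6 : DecidableRel G6.Adj := fun _ _ => inferInstanceAs (Decidable (_ = true))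

instance instDecCB (a b : ℕ) : DecidableRel (completeBipartiteGraph (Fin a) (Fin b)).Adj :=
  fun v w => inferInstanceAs (Decidable ((v.isLeft ∧ w.isRight) ∨ (v.isRight ∧ w.isLeft)))

lemma nf_norm (u : Fin 6) (inst : Fintype ((G6.neighborSet u) : Set (Fin 6))) :
    @SimpleGraph.neighborFinset _ G6 u inst = Finset.univ.filter (G6.Adj u) := by
  ext v
  simp [SimpleGraph.mem_neighborFinset]

lemma deg_norm (u : Fin 6) (inst : Fintype ((G6.neighborSet u) : Set (Fin 6))) :
    @SimpleGraph.degree _ G6 u inst = (Finset.univ.filter (G6.Adj u)).card :=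
  congrArg Finset.card (nf_norm u inst)

lemma hIndG : indepSets G6 = ({(∅ : Finset _), {0}, {1}, {2}, {1, 2}, {3}, {1, 3}, {2, 3}, {1, 2, 3}, {4}, {0, 4}, {3, 4}, {5}, {0, 5}, {1, 5}, {2, 5}, {1, 2, 5}, {3, 5}, {1, 3, 5}, {2, 3, 5}, {1, 2, 3, 5}} : Finset (Finset (Fin 6))) := by
  ext I
  simp only [indepSets, Finset.mem_filter, Finset.mem_univ, true_and]
  revert I; decide

lemma hZG : hcZ G6 5 = 1381 := by
  rw [hcZ, hIndG]
  simp (config := { decide := true }) [Finset.sum_insert, Finset.mem_insert,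
    Finset.card_insert_of_notMem, Finset.mem_singleton]
  norm_num

lemma hSG : (∑ I ∈ indepSets G6, (I.card : ℝ) * 5 ^ I.card) = 4480 := by
  rw [hIndG]
  simp (config := { decide := true }) [Finset.sum_insert, Finset.mem_insert,
    Finset.card_insert_of_notMem, Finset.mem_singleton]
  norm_num

lemma hEG : hcE G6 5 = 2240 / 4143 := by
  rw [hcE, hSG, hZG]
  norm_num


lemma hIndK32 : indepSets (completeBipartiteGraph (Fin 3) (Fin 2)) =
    ({(∅ : Finset _), {Sum.inl 0}, {Sum.inl 1}, {Sum.inl 0, Sum.inl 1}, {Sum.inl 2}, {Sum.inl 0, Sum.inl 2}, {Sum.inl 1, Sum.inl 2}, {Sum.inl 0, Sum.inl 1, Sum.inl 2}, {Sum.inr 0}, {Sum.inr 1}, {Sum.inr 0, Sum.inr 1}} : Finset (Finset (Fin 3 ⊕ Fin 2))) := by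
  ext I
  simp only [indepSets, Finset.mem_filter, Finset.mem_univ, true_and]
  revert I; decide

lemma hEK32 : hcE (completeBipartiteGraph (Fin 3) (Fin 2)) 5 = 120 / 251 := by
  rw [hcE, hcZ, hIndK32]
  simp (config := { decide := true }) [Finset.sum_insert, Finset.mem_insert,
    Finset.card_insert_of_notMem, Finset.mem_singleton]
  norm_num


lemma hIndK23 : indepSets (completeBipartiteGraph (Fin 2) (Fin 3)) =
    ({(∅ : Finset _), {Sum.inl 0}, {Sum.inl 1}, {Sum.inl 0, Sum.inl 1}, {Sum.inr 0}, {Sum.inr 1}, {Sum.inr 0, Sum.inr 1}, {Sum.inr 2}, {Sum.inr 0, Sum.inr 2}, {Sum.inr 1, Sum.inr 2}, {Sum.inr 0, Sum.inr 1, Sum.inr 2}} : Finset (Finset (Fin 2 ⊕ Fin 3))) := by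
  ext I
  simp only [indepSets, Finset.mem_filter, Finset.mem_univ, true_and]
  revert I; decide

lemma hEK23 : hcE (completeBipartiteGraph (Fin 2) (Fin 3)) 5 = 120 / 251 := by
  rw [hcE, hcZ, hIndK23]
  simp (config := { decide := true }) [Finset.sum_insert, Finset.mem_insert,
    Finset.card_insert_of_notMem, Finset.mem_singleton]
  norm_num


lemma hIndK31 : indepSets (completeBipartiteGraph (Fin 3) (Fin 1)) =
    ({(∅ : Finset _), {Sum.inl 0}, {Sum.inl 1}, {Sum.inl 0, Sum.inl 1}, {Sum.inl 2}, {Sum.inl 0, Sum.inl 2}, {Sum.inl 1, Sum.inl 2}, {Sum.inl 0, Sum.inl 1, Sum.inl 2}, {Sum.inr 0}} : Finset (Finset (Fin 3 ⊕ Fin 1))) := by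
  ext I
  simp only [indepSets, Finset.mem_filter, Finset.mem_univ, true_and]
  revert I; decide

lemma hEK31 : hcE (completeBipartiteGraph (Fin 3) (Fin 1)) 5 = 545 / 884 := by
  rw [hcE, hcZ, hIndK31]
  simp (config := { decide := true }) [Finset.sum_insert, Finset.mem_insert,
    Finset.card_insert_of_notMem, Finset.mem_singleton]
  norm_num


lemma hIndK13 : indepSets (completeBipartiteGraph (Fin 1) (Fin 3)) =
    ({(∅ : Finset _), {Sum.inl 0}, {Sum.inr 0}, {Sum.inr 1}, {Sum.inr 0, Sum.inr 1}, {Sum.inr 2}, {Sum.inr 0, Sum.inr 2}, {Sum.inr 1, Sum.inr 2}, {Sum.inr 0, Sum.inr 1, Sum.inr 2}} : Finset (Finset (Fin 1 ⊕ Fin 3))) := by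
  ext I
  simp only [indepSets, Finset.mem_filter, Finset.mem_univ, true_and]
  revert I; decide

lemma hEK13 : hcE (completeBipartiteGraph (Fin 1) (Fin 3)) 5 = 545 / 884 := by
  rw [hcE, hcZ, hIndK13]
  simp (config := { decide := true }) [Finset.sum_insert, Finset.mem_insert,
    Finset.card_insert_of_notMem, Finset.mem_singleton]
  norm_num


/-- There is a graph `G` with no isolated vertices and a fugacity `λ > 0` for which
the occupancy fraction exceeds the edge-based degree-sequence expression
`(1/n) Σ_{uv ∈ E(G)} ((d_u+d_v)/(d_u d_v)) E_{K_{d_u,d_v}}(λ)`; the sum over edges is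
written as half the sum over ordered adjacent pairs. -/
theorem stmt18 : ∃ (n : ℕ) (G : SimpleGraph (Fin n)) (l : ℝ), 0 < l ∧
    (∀ u, 0 < G.degree u) ∧
    (1 / (n : ℝ)) * ((1 / 2) * ∑ u : Fin n, ∑ v ∈ G.neighborFinset u,
        (((G.degree u : ℝ) + (G.degree v : ℝ)) / ((G.degree u : ℝ) * (G.degree v : ℝ))) *
          hcE (completeBipartiteGraph (Fin (G.degree u)) (Fin (G.degree v))) l)
      < hcE G l := by
  refine ⟨6, G6, 5, by norm_num, ?_, ?_⟩
  · intro u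
    rw [deg_norm]
    revert u; decide
  · simp only [deg_norm, nf_norm]
    rw [Fin.sum_univ_six,
        show Finset.univ.filter (G6.Adj 0) = {1,2,3} from by decide,
        show Finset.univ.filter (G6.Adj 1) = {0,4} from by decide,
        show Finset.univ.filter (G6.Adj 2) = {0,4} from by decide,
        show Finset.univ.filter (G6.Adj 3) = {0} from by decide,
        show Finset.univ.filter (G6.Adj 4) = {1,2,5} from by decide,
        show Finset.univ.filter (G6.Adj 5) = {4} from by decide]
    simp (config := { decide := true }) only [Finset.sum_insert, Finset.mem_insert,
      Finset.mem_singleton, Finset.sum_singleton]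
    rw [deg_norm 0, deg_norm 1, deg_norm 2, deg_norm 3, deg_norm 4, deg_norm 5]
    rw [show (Finset.univ.filter (G6.Adj 0)).card = 3 from by decide,
        show (Finset.univ.filter (G6.Adj 1)).card = 2 from by decide,
        show (Finset.univ.filter (G6.Adj 2)).card = 2 from by decide,
        show (Finset.univ.filter (G6.Adj 3)).card = 1 from by decide,
        show (Finset.univ.filter (G6.Adj 4)).card = 3 from by decide,
        show (Finset.univ.filter (G6.Adj 5)).card = 1 from by decide]
    rw [hEG, hEK32, hEK23, hEK31, hEK13]
    simp only [show ({1,2,3} : Finset (Fin 6)).card = 3 from by decide,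
      show ({0,4} : Finset (Fin 6)).card = 2 from by decide,
      show ({1,2,5} : Finset (Fin 6)).card = 3 from by decide,
      show ({0} : Finset (Fin 6)).card = 1 from by decide,
      show ({4} : Finset (Fin 6)).card = 1 from by decide]
    norm_num
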